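/- The representable-polynomial functor is adjoint to global sections: for any type A and any polynomial functor p, the type of natural transformations from the associated functor of p to the representable functor X ↦ (A → X) is in bijection with the type of functions A → Γp, where Γp := Π (i : p.A), p.B i is the set of global sections of p. -/

import Mathlib

open CategoryTheory

universe u

/-- The associated functor `Type u ⥤ Type u` of a polynomial functor. -/
def PFunctor.toFunctor (P : PFunctor.{u}) : Type u ⥤ Type u where
  obj X := P.Obj X
  map f := TypeCat.ofHom fun x => P.map f x
  map_id := by intro X; refine ConcreteCategory.hom_ext _ _ fun x => ?_; exact P.id_map x
  map_comp := by intro X Y Z f g; refine ConcreteCategory.hom_ext _ _ fun x => ?_; exact (P.map_map f g x).symm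

/-- The representable functor `X ↦ (A → X)`. -/
def repFun (A : Type u) : Type u ⥤ Type u where
  obj X := A → X
  map f := TypeCat.ofHom fun g => f ∘ g
  map_id := by intro X; ext g; rfl
  map_comp := by intro X Y Z f g; ext h; rfl

/-- the representable-polynomial functor is adjoint to global sections:
`Nat(p, y^A) ≅ (A → Γp)` where `Γp = Π (i : p.A), p.B i`. -/
theorem stmt_12 (A : Type u) (p : PFunctor.{u}) :
    Nonempty ((p.toFunctor ⟶ repFun A) ≃ (A → ∀ i : p.A, p.B i)) := by
  refine ⟨{
    toFun := fun η a i => η.app (p.B i) (⟨i, id⟩ : p.Obj (p.B i)) a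
    invFun := fun g => {
      app := fun X => TypeCat.ofHom fun (x : p.Obj X) a => x.2 (g a x.1)
      naturality := by intro X Y h; rfl }
    left_inv := ?_
    right_inv := ?_ }⟩
  · intro η
    ext X x
    change p.Obj X at x
    obtain ⟨i, v⟩ := x
    have := η.naturality (X := p.B i) (Y := X) (TypeCat.ofHom v)
    have h2 := types_congr_hom this (⟨i, id⟩ : p.Obj (p.B i))
    funext a
    exact congrFun h2.symm a
  · intro g
    rfl
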